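/- Let S_e(x,y) = Σ_{(a,b)∈F} s_{ab} x^a y^b be supported on lattice points on the line t₁ + m t₂ = α with m ≥ 1 a non-integer rational and α = (1+m)d for some d > 0. Then every exponent b of y appearing satisfies b < 2d, and if S_e(1,y) = y^β R(y^c) for an integer c ≥ 2 and polynomial R, then every real zero of S_e(1,y) other than y = 0 has order less than d. -/
import Mathlib


open Polynomial

lemma aux_A_ne_zero (r : ℝ) (c : ℕ) (hr : r ≠ 0) (hc : 2 ≤ c) :
    ((X : ℝ[X]) ^ c - C (r ^ c)) ≠ 0 := by
  intro h
  have h0 := congrArg (fun p : ℝ[X] => p.eval 0) h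
  simp [zero_pow (show c ≠ 0 by omega)] at h0
  exact hr h0.1

lemma aux_rootMult_one (r : ℝ) (c : ℕ) (hr : r ≠ 0) (hc : 2 ≤ c) :
    rootMultiplicity r ((X : ℝ[X]) ^ c - C (r ^ c)) = 1 := by
  set A : ℝ[X] := X ^ c - C (r ^ c) with hA
  have hA0 : A ≠ 0 := aux_A_ne_zero r c hr hc
  have hroot : A.IsRoot r := by simp [hA, IsRoot]
  have h1 : 1 ≤ rootMultiplicity r A := (rootMultiplicity_pos hA0).2 hroot
  have hder : A.derivative = C (c : ℝ) * X ^ (c - 1) := by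
    rw [hA, derivative_sub, derivative_X_pow, derivative_C, sub_zero]
  have hdnr : ¬ A.derivative.IsRoot r := by
    rw [IsRoot, hder]
    simp only [eval_mul, eval_C, eval_pow, eval_X]
    exact mul_ne_zero (Nat.cast_ne_zero.2 (by omega)) (pow_ne_zero _ hr)
  have h2 : rootMultiplicity r A - 1 ≤ 0 := by
    have := rootMultiplicity_sub_one_le_derivative_rootMultiplicity A r
    rwa [rootMultiplicity_eq_zero hdnr] at this
  omega

theorem stmt_11 (m d : ℝ) (hm1 : 1 ≤ m) (hmQ : ∃ q : ℚ, (q : ℝ) = m)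
    (hmZ : ¬ ∃ n : ℤ, (n : ℝ) = m) (hd : 0 < d)
    (F : Finset (ℕ × ℕ)) (s : ℕ × ℕ → ℝ) (hs : ∀ p ∈ F, s p ≠ 0)
    (hline : ∀ p ∈ F, (p.1 : ℝ) + m * (p.2 : ℝ) = (1 + m) * d)
    (Q : Polynomial ℝ) (hQ : Q = ∑ p ∈ F, Polynomial.C (s p) * X ^ p.2) :
    (∀ p ∈ F, (p.2 : ℝ) < 2 * d) ∧
    (∀ (β c : ℕ) (R : Polynomial ℝ), 2 ≤ c → Q = X ^ β * R.comp (X ^ c) →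
      ∀ r : ℝ, r ≠ 0 → Q.eval r = 0 → (Q.rootMultiplicity r : ℝ) < d) := by
  have hm1' : 1 < m := lt_of_le_of_ne hm1 (fun h => hmZ ⟨1, by simp [h]⟩)
  have part1 : ∀ p ∈ F, (p.2 : ℝ) < 2 * d := by
    intro p hp
    have hl := hline p hp
    have h1 : (0:ℝ) ≤ p.1 := Nat.cast_nonneg _
    nlinarith [mul_pos hd (sub_pos.2 hm1')]
  refine ⟨part1, ?_⟩
  intro β c R hc hfac r hr hev
  by_cases hQ0 : Q = 0
  · simpa [hQ0] using hd
  -- natDegree Q < 2 * d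
  have hdeg : (Q.natDegree : ℝ) < 2 * d := by
    obtain ⟨n, hn⟩ : ∃ n, n = Q.natDegree := ⟨_, rfl⟩
    have hcoeff : Q.coeff n ≠ 0 := by
      rw [hn]; simpa using mt leadingCoeff_eq_zero.mp hQ0
    rw [hQ] at hcoeff
    simp only [finset_sum_coeff, coeff_C_mul, coeff_X_pow] at hcoeff
    obtain ⟨p, hp, hne⟩ := Finset.exists_ne_zero_of_sum_ne_zero hcoeff
    have hnp : n = p.2 := by by_contra h; simp [h] at hne
    rw [← hn, hnp]; exact part1 p hp
  -- R ≠ 0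
  have hRc0 : R.comp (X ^ c : ℝ[X]) ≠ 0 := by
    intro h; exact hQ0 (by rw [hfac, h, mul_zero])
  have hR0 : R ≠ 0 := fun h => hRc0 (by simp [h])
  set k := rootMultiplicity (r ^ c) R with hk
  -- factor R
  have hTfac := pow_mul_divByMonic_rootMultiplicity_eq R (r ^ c)
  set T := R /ₘ (X - C (r ^ c)) ^ k with hT
  have hTev : T.eval (r ^ c) ≠ 0 := eval_divByMonic_pow_rootMultiplicity_ne_zero (r ^ c) hR0
  -- factor X^c - C (r^c)
  have hAm := aux_rootMult_one r c hr hc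
  have hA0 : ((X : ℝ[X]) ^ c - C (r ^ c)) ≠ 0 := aux_A_ne_zero r c hr hc
  have hUfac := pow_mul_divByMonic_rootMultiplicity_eq ((X : ℝ[X]) ^ c - C (r ^ c)) r
  rw [hAm, pow_one] at hUfac
  have hUev' := eval_divByMonic_pow_rootMultiplicity_ne_zero r hA0
  rw [hAm, pow_one] at hUev'
  set U := ((X : ℝ[X]) ^ c - C (r ^ c)) /ₘ (X - C r) with hU
  -- Q = W * (X - C r)^k with W.eval r ≠ 0
  have hcomp : R.comp (X ^ c : ℝ[X]) = ((X:ℝ[X]) - C r) ^ k * (U ^ k * T.comp (X ^ c)) := by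
    calc R.comp (X ^ c : ℝ[X]) = ((X - C (r ^ c)) ^ k * T).comp (X ^ c) := by rw [hTfac]
      _ = ((X:ℝ[X]) ^ c - C (r ^ c)) ^ k * T.comp (X ^ c) := by
          rw [mul_comp, pow_comp, sub_comp, X_comp, C_comp]
      _ = (((X:ℝ[X]) - C r) * U) ^ k * T.comp (X ^ c) := by rw [hUfac]
      _ = ((X:ℝ[X]) - C r) ^ k * (U ^ k * T.comp (X ^ c)) := by rw [mul_pow]; ring
  have hW : Q = (X ^ β * U ^ k * T.comp (X ^ c)) * ((X:ℝ[X]) - C r) ^ k := by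
    rw [hfac, hcomp]; ring
  have hWev : ((X:ℝ[X]) ^ β * U ^ k * T.comp (X ^ c)).eval r ≠ 0 := by
    simp only [eval_mul, eval_pow, eval_X, eval_comp]
    exact mul_ne_zero (mul_ne_zero (pow_ne_zero _ hr) (pow_ne_zero _ hUev')) hTev
  have hW0 : ((X:ℝ[X]) ^ β * U ^ k * T.comp (X ^ c)) ≠ 0 := fun h => hWev (by simp [h])
  have hmult : Q.rootMultiplicity r = k := by
    rw [hW, rootMultiplicity_mul_X_sub_C_pow hW0,
      rootMultiplicity_eq_zero (by simpa [IsRoot] using hWev), zero_add]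
  -- k ≤ natDegree R
  have hkR : k ≤ R.natDegree := by
    have hdvd := pow_rootMultiplicity_dvd R (r ^ c)
    have := natDegree_le_of_dvd hdvd hR0
    rwa [natDegree_pow, natDegree_X_sub_C, mul_one] at this
  -- natDegree Q = β + natDegree R * c
  have hdQ : Q.natDegree = β + R.natDegree * c := by
    rw [hfac, natDegree_mul (pow_ne_zero β X_ne_zero) hRc0, natDegree_X_pow,
      natDegree_comp, natDegree_X_pow]
  have h2R : 2 * R.natDegree ≤ Q.natDegree := by
    have : 2 * R.natDegree ≤ R.natDegree * c := by nlinarith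
    omega
  have hRd : (R.natDegree : ℝ) < d := by
    have : ((2 * R.natDegree : ℕ) : ℝ) ≤ (Q.natDegree : ℝ) := Nat.cast_le.2 h2R
    push_cast at this
    linarith
  rw [hmult]
  calc (k : ℝ) ≤ R.natDegree := Nat.cast_le.2 hkR
    _ < d := hRd
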